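/- arXiv:0906.1295 — 5 statements merged into one kernel-verified Lean document; each statement's English description precedes it below -/
import Mathlib

section
/- Let z ∈ ℂ with Im z ≠ 0 and |z| < 1. The three points 1/z, conj(z), and -1 lie on a common circle C_z in ℂ, and this circle is tangent to the real axis at -1 (i.e., -1 ∈ C_z and C_z ∩ ℝ = {-1}). -/
open Complex

theorem stmt1 (z : ℂ) (h0 : 0 < ‖z‖) (h1 : ‖z‖ < 1)
    (hQ : z.im ≠ 0) :
    ∃ c : ℂ, ∃ r : ℝ, 0 < r ∧
      ‖1 / z - c‖ = r ∧
      ‖(starRingEnd ℂ) z - c‖ = r ∧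
      ‖(-1 : ℂ) - c‖ = r ∧
      {w : ℂ | ‖w - c‖ = r ∧ w.im = 0} = {(-1 : ℂ)} := by
  have hz : z ≠ 0 := fun h => by simp [h] at h0
  have hy : z.im ≠ 0 := hQ
  set x := z.re with hx
  set y := z.im with hyd
  have hns : Complex.normSq z = x^2 + y^2 := by
    rw [Complex.normSq_apply]; ring
  have hnspos : (0:ℝ) < x^2 + y^2 := by positivity
  set t : ℝ := -((x+1)^2+y^2)/(2*y) with htd
  have hnum : (0:ℝ) < (x+1)^2 + y^2 := by positivity
  have ht : t ≠ 0 := by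
    rw [htd]
    exact div_ne_zero (by linarith) (by simpa using hy)
  refine ⟨⟨-1, t⟩, |t|, abs_pos.2 ht, ?_, ?_, ?_, ?_⟩
  · have hn : Complex.normSq (1/z - ⟨-1, t⟩) = t^2 := by
      rw [Complex.normSq_apply]
      simp only [Complex.sub_re, Complex.sub_im, one_div, Complex.inv_re, Complex.inv_im, hns,
        htd]
      field_simp
      ring
    rw [Complex.norm_def, hn, Real.sqrt_sq_eq_abs]
  · have hn : Complex.normSq ((starRingEnd ℂ) z - ⟨-1, t⟩) = t^2 := by
      rw [Complex.normSq_apply]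
      simp only [Complex.sub_re, Complex.sub_im, Complex.conj_re, Complex.conj_im, htd]
      field_simp
      ring
    rw [Complex.norm_def, hn, Real.sqrt_sq_eq_abs]
  · have hn : Complex.normSq ((-1:ℂ) - ⟨-1, t⟩) = t^2 := by
      rw [Complex.normSq_apply]
      simp [sq]
    rw [Complex.norm_def, hn, Real.sqrt_sq_eq_abs]
  · ext w
    simp only [Set.mem_setOf_eq, Set.mem_singleton_iff]
    constructor
    · rintro ⟨habs, him⟩
      have hn : Complex.normSq (w - ⟨-1, t⟩) = t^2 := by
        have h2 := congrArg (· ^ 2) habs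
        simpa [Complex.sq_norm, sq_abs] using h2
      rw [Complex.normSq_apply] at hn
      simp only [Complex.sub_re, Complex.sub_im, him] at hn
      have hre : w.re = -1 := by nlinarith [sq_nonneg (w.re + 1)]
      exact Complex.ext (by simpa using hre) (by simpa using him)
    · rintro rfl
      refine ⟨?_, by simp⟩
      have hn : Complex.normSq ((-1:ℂ) - ⟨-1, t⟩) = t^2 := by
        rw [Complex.normSq_apply]; simp [sq]
      rw [Complex.norm_def, hn, Real.sqrt_sq_eq_abs]
end

section
/- Let z ∈ ℂ with Im z ≠ 0. The unique circle passing through the three points 1/z, conj(z), and -1 has center c = -1 - i·|z+1|²/(2·Im z), i.e., the distances |c - 1/z|, |c - conj(z)|, and |c - (-1)| are all equal (assuming z ≠ 0 so 1/z is defined). -/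
open Complex

theorem stmt2 (z : ℂ) (hz : z ≠ 0) (hQ : z.im ≠ 0) :
    let c : ℂ := -1 - Complex.I * ((‖z + 1‖) ^ 2 / (2 * z.im) : ℝ)
    ‖c - 1 / z‖ = ‖c - (starRingEnd ℂ) z‖ ∧
    ‖c - (starRingEnd ℂ) z‖ = ‖c - (-1)‖ := by
  intro c
  have hns : Complex.normSq z ≠ 0 := (Complex.normSq_pos.mpr hz).ne'
  have habs : (‖z + 1‖) ^ 2 = (z.re + 1) ^ 2 + z.im ^ 2 := by
    rw [Complex.sq_norm, Complex.normSq_apply]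
    simp
    ring
  have h2 : z.re * z.re + z.im * z.im ≠ 0 := by
    have h3 : 0 < z.im * z.im := mul_self_pos.mpr hQ
    nlinarith [mul_self_nonneg z.re]
  simp only [Complex.norm_def]
  constructor <;> congr 1
  all_goals
    simp only [c, Complex.normSq_apply, Complex.sub_re, Complex.sub_im, Complex.neg_re,
      Complex.neg_im, Complex.one_re, Complex.one_im, Complex.mul_re, Complex.mul_im,
      Complex.I_re, Complex.I_im, Complex.ofReal_re, Complex.ofReal_im, Complex.div_re,
      Complex.div_im, Complex.one_re, Complex.one_im, Complex.conj_re, Complex.conj_im,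
      habs, Complex.normSq_apply]
  all_goals field_simp [h2]
  all_goals ring
end

section
/- For a ∈ ℂ and r > 0, define the semiquadric Λ_{a,r} = {(z,w) ∈ ℂ² : (z-a)(w - conj(a)) = r², 0 < |z-a| < r}. Then the closure of Λ_{a,r} in ℂ² intersects Σ = {(ζ, conj(ζ)) : ζ ∈ ℂ} exactly in the set {(ζ, conj(ζ)) : |ζ - a| = r}. -/
open Complex Filter Topology

theorem stmt4 (a : ℂ) (r : ℝ) (hr : 0 < r) :
    closure {p : ℂ × ℂ | (p.1 - a) * (p.2 - (starRingEnd ℂ) a) = (r : ℂ) ^ 2 ∧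
        0 < ‖p.1 - a‖ ∧ ‖p.1 - a‖ < r} ∩
      {p : ℂ × ℂ | p.2 = (starRingEnd ℂ) p.1} =
    {p : ℂ × ℂ | p.2 = (starRingEnd ℂ) p.1 ∧ ‖p.1 - a‖ = r} := by
  ext p
  constructor
  · rintro ⟨hcl, hσ⟩
    refine ⟨hσ, ?_⟩
    have hsub : closure {p : ℂ × ℂ | (p.1 - a) * (p.2 - (starRingEnd ℂ) a) = (r:ℂ)^2 ∧
        0 < ‖p.1 - a‖ ∧ ‖p.1 - a‖ < r} ⊆
        {p : ℂ × ℂ | (p.1 - a) * (p.2 - (starRingEnd ℂ) a) = (r:ℂ)^2} := by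
      apply closure_minimal
      · intro q hq; exact hq.1
      · exact isClosed_eq (by fun_prop) continuous_const
    have heq := hsub hcl
    simp only [Set.mem_setOf_eq] at heq hσ
    rw [hσ, ← map_sub] at heq
    rw [Complex.mul_conj, Complex.normSq_eq_norm_sq] at heq
    have h2 : (‖p.1 - a‖)^2 = r^2 := by
      exact_mod_cast heq
    have := norm_nonneg (p.1 - a)
    nlinarith [norm_nonneg (p.1 - a)]
  · rintro ⟨hσ, habs⟩
    refine ⟨?_, hσ⟩
    set c := p.1 - a with hc_def
    have hc : c ≠ 0 := by
      intro h
      rw [h, norm_zero] at habs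
      linarith
    have hrc : (r:ℂ)^2 = c * (starRingEnd ℂ) c := by
      rw [Complex.mul_conj, Complex.normSq_eq_norm_sq, habs]
      push_cast
      ring
    -- limit along t → 1 within Ioo 0 1
    have hne : (𝓝[Set.Ioo (0:ℝ) 1] 1).NeBot := by
      apply mem_closure_iff_nhdsWithin_neBot.mp
      rw [closure_Ioo (by norm_num : (0:ℝ) ≠ 1)]
      exact Set.right_mem_Icc.mpr (by norm_num)
    have ht : Tendsto (fun t : ℝ => (t : ℂ)) (𝓝[Set.Ioo (0:ℝ) 1] 1) (𝓝 1) :=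
      (Complex.continuous_ofReal.tendsto 1).mono_left nhdsWithin_le_nhds
    have h1 : Tendsto (fun t : ℝ => a + (t:ℂ) * c) (𝓝[Set.Ioo (0:ℝ) 1] 1) (𝓝 p.1) := by
      have : Tendsto (fun t : ℝ => a + (t:ℂ) * c) (𝓝[Set.Ioo (0:ℝ) 1] 1)
          (𝓝 (a + 1 * c)) := tendsto_const_nhds.add (ht.mul tendsto_const_nhds)
      simpa [hc_def] using this
    have h2 : Tendsto (fun t : ℝ => (starRingEnd ℂ) a + (r:ℂ)^2 / ((t:ℂ) * c))
        (𝓝[Set.Ioo (0:ℝ) 1] 1) (𝓝 p.2) := by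
      have hlim : Tendsto (fun t : ℝ => (starRingEnd ℂ) a + (r:ℂ)^2 / ((t:ℂ) * c))
          (𝓝[Set.Ioo (0:ℝ) 1] 1) (𝓝 ((starRingEnd ℂ) a + (r:ℂ)^2 / (1 * c))) :=
        tendsto_const_nhds.add (tendsto_const_nhds.div (ht.mul tendsto_const_nhds)
          (by simpa using hc))
      have : (starRingEnd ℂ) a + (r:ℂ)^2 / (1 * c) = p.2 := by
        rw [one_mul, hrc, mul_comm c, mul_div_assoc, div_self hc, mul_one, hσ, hc_def,
          ← map_add]
        congr 1
        ring
      rwa [this] at hlim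
    apply mem_closure_of_tendsto (h1.prodMk_nhds h2)
    filter_upwards [self_mem_nhdsWithin] with t htI
    obtain ⟨ht0, ht1⟩ := htI
    have htc : (t:ℂ) * c ≠ 0 := by
      simp [hc, Complex.ofReal_ne_zero, ne_of_gt ht0]
    constructor
    · simp only [add_sub_cancel_left]
      exact mul_div_cancel₀ _ htc
    · simp only [add_sub_cancel_left, norm_mul, Complex.norm_real, Real.norm_eq_abs, abs_of_pos ht0, habs]
      constructor
      · positivity
      · nlinarith
end

section
/- For -1 < t < s ≤ 0, the semiquadrics Λ_{t,t+1} and Λ_{s,s+1} are disjoint: there is no (z,w) ∈ ℂ² with (z-t)(w-t) = (t+1)², 0 < |z-t| < t+1, (z-s)(w-s) = (s+1)², and 0 < |z-s| < s+1. -/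
open Complex

theorem stmt15 (t s : ℝ) (ht : -1 < t) (hts : t < s) (hs : s ≤ 0) :
    ¬ ∃ p : ℂ × ℂ,
      ((p.1 - t) * (p.2 - t) = ((t : ℂ) + 1) ^ 2 ∧
        0 < ‖p.1 - t‖ ∧ ‖p.1 - t‖ < t + 1) ∧
      ((p.1 - s) * (p.2 - s) = ((s : ℂ) + 1) ^ 2 ∧
        0 < ‖p.1 - s‖ ∧ ‖p.1 - s‖ < s + 1) := by
  rintro ⟨⟨z, w⟩, ⟨h1, hz1pos, hz1lt⟩, ⟨h2, hz2pos, hz2lt⟩⟩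
  simp only at h1 h2 hz1pos hz1lt hz2pos hz2lt
  have hts' : (t : ℂ) ≠ (s : ℂ) := by
    exact_mod_cast hts.ne
  have key : ((t : ℂ) - s) * (z + 1) ^ 2 = 0 := by
    linear_combination (z - (t : ℂ)) * h2 - (z - (s : ℂ)) * h1
  have hz : z = -1 := by
    rcases mul_eq_zero.mp key with h | h
    · exact absurd (sub_eq_zero.mp h) hts'
    · have h0 := pow_eq_zero_iff (n := 2) (by norm_num) |>.mp h
      exact eq_neg_of_add_eq_zero_left h0
  subst hz
  have : ‖(-1 - (t : ℂ))‖ = t + 1 := by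
    have : (-1 : ℂ) - (t : ℂ) = ((-(t + 1) : ℝ) : ℂ) := by push_cast; ring
    rw [this, Complex.norm_real, Real.norm_eq_abs, abs_neg, abs_of_pos (by linarith)]
  linarith [hz1lt, this.symm.le.trans hz1lt.le]
end

section
/- Let z ∈ ℂ with 0 < |z| ≤ 1 and Im z ≠ 0, and let -1 < t ≤ 0 be such that |z - t| < t + 1. Then the point w = t + (t+1)²/(z - t) lies on the circle centered at c = -1 - i·|z+1|²/(2·Im z) with radius |c + 1|, and w ≠ -1. -/
set_option maxHeartbeats 1000000


open Complex

theorem stmt17 (z : ℂ) (hz0 : 0 < ‖z‖) (hz1 : ‖z‖ ≤ 1)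
    (hQ : z.im ≠ 0) (t : ℝ) (ht0 : -1 < t) (ht1 : t ≤ 0)
    (hzt : ‖z - t‖ < t + 1) :
    let c : ℂ := -1 - Complex.I * ((‖z + 1‖) ^ 2 / (2 * z.im) : ℝ)
    let w : ℂ := (t : ℂ) + ((t : ℂ) + 1) ^ 2 / (z - t)
    ‖w - c‖ = ‖c + 1‖ ∧ w ≠ -1 := by
  intro c w
  have hd : z - (t:ℂ) ≠ 0 := by
    intro h
    apply hQ
    have := congrArg Complex.im h
    simpa using this
  have hns : Complex.normSq (z - (t:ℂ)) ≠ 0 := by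
    simpa using hd
  have hns2 : (z.re - t) * (z.re - t) + z.im * z.im ≠ 0 := by
    have : Complex.normSq (z - (t:ℂ)) = (z.re - t) * (z.re - t) + z.im * z.im := by
      simp [Complex.normSq_apply]
    rwa [this] at hns
  have ht1' : (0:ℝ) < t + 1 := by linarith
  have hw1 : w + 1 = (((t:ℝ) + 1 : ℝ) : ℂ) * (z + 1) / (z - t) := by
    show (t : ℂ) + ((t : ℂ) + 1) ^ 2 / (z - t) + 1 = _
    push_cast
    field_simp
    ring
  have hz1ne : (z : ℂ) + 1 ≠ 0 := by
    intro h
    apply hQ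
    have := congrArg Complex.im h
    simpa using this
  set k : ℝ := (‖z + 1‖) ^ 2 / (2 * z.im) with hkdef
  have hc1 : c + 1 = -(Complex.I * (k : ℝ)) := by
    show -1 - Complex.I * ((‖z + 1‖) ^ 2 / (2 * z.im) : ℝ) + 1 = _
    ring
  have habs : (‖z + 1‖ : ℝ) ^ 2 = (z.re + 1)^2 + z.im^2 := by
    rw [Complex.sq_norm, Complex.normSq_apply]
    simp
    ring
  have hk : k = ((z.re + 1)^2 + z.im^2) / (2 * z.im) := by
    rw [hkdef, habs]
  refine ⟨?_, ?_⟩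
  · have hwc : w - c = (((t:ℝ) + 1 : ℝ) : ℂ) * (z + 1) / (z - t) + Complex.I * (k : ℝ) := by
      have h1 : w - c = (w + 1) - (c + 1) := by ring
      rw [h1, hw1, hc1]
      ring
    rw [← Real.sqrt_sq (norm_nonneg (w - c)),
        ← Real.sqrt_sq (norm_nonneg (c + 1))]
    congr 1
    rw [Complex.sq_norm, Complex.sq_norm, hwc, hc1]
    rw [Complex.normSq_apply, Complex.normSq_apply]
    simp only [Complex.add_re, Complex.add_im, Complex.sub_re, Complex.sub_im,
      Complex.div_re, Complex.div_im, Complex.mul_re, Complex.mul_im,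
      Complex.ofReal_re, Complex.ofReal_im, Complex.one_re, Complex.one_im,
      Complex.I_re, Complex.I_im, Complex.neg_re, Complex.neg_im,
      Complex.normSq_apply, hk]
    field_simp
    ring
  · intro h
    have h0 : w + 1 = 0 := by rw [h]; ring
    rw [hw1, div_eq_zero_iff] at h0
    rcases h0 with h1 | h1
    · rcases mul_eq_zero.mp h1 with h2 | h2
      · have : (t:ℝ) + 1 = 0 := by exact_mod_cast h2
        linarith
      · exact hz1ne h2
    · exact hd h1
end
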